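/- For every complex number q with |q| < 1, the double Lambert series f2(q) := Σ_{k≥1} Σ_{ℓ≥1} (k+ℓ) q^{k+ℓ+kℓ} / ((1-q^k)(1-q^ℓ)) and f3(q) := Σ_{k≥1} Σ_{ℓ>k} 2k q^{k+ℓ} / ((1-q^k)(1-q^ℓ)) are equal: f2(q) = f3(q). -/

import Mathlib

open Function

noncomputable def xq (q : ℂ) (n : ℕ) : ℂ := q ^ (n + 1) / (1 - q ^ (n + 1))

noncomputable def Aq (q : ℂ) (p : ℕ × ℕ) : ℂ :=
  ((p.1 : ℂ) + 1) * q ^ ((p.1 + 1) * (p.2 + 1)) * xq q p.1 * xq q p.2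

lemma qpow_lt_one {q : ℂ} (hq : ‖q‖ < 1) (n : ℕ) : ‖q ^ (n + 1)‖ < 1 := by
  rw [norm_pow]; exact pow_lt_one₀ (norm_nonneg q) hq (Nat.succ_ne_zero n)

lemma one_sub_qpow_ne {q : ℂ} (hq : ‖q‖ < 1) (n : ℕ) : 1 - q ^ (n + 1) ≠ 0 := by
  intro h
  rw [sub_eq_zero] at h
  have h1 := qpow_lt_one hq n
  rw [← h] at h1
  simp at h1

lemma geom_shift {z : ℂ} (hz : ‖z‖ < 1) : ∑' m : ℕ, z ^ (m + 1) = z / (1 - z) := by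
  have h : ∀ m : ℕ, z ^ (m + 1) = z * z ^ m := fun m => by ring
  simp_rw [h]
  rw [tsum_mul_left, tsum_geometric_of_norm_lt_one hz, div_eq_mul_inv]

lemma xq_geom {q : ℂ} (hq : ‖q‖ < 1) (n : ℕ) :
    ∑' m : ℕ, (q ^ (n + 1)) ^ (m + 1) = xq q n :=
  geom_shift (qpow_lt_one hq n)

lemma xq_bound {q : ℂ} (hq : ‖q‖ < 1) (n : ℕ) :
    ‖xq q n‖ ≤ ‖q‖ ^ (n + 1) / (1 - ‖q‖) := by
  have h1 : (0:ℝ) < 1 - ‖q‖ := by linarith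
  have h2 : 1 - ‖q‖ ≤ ‖1 - q ^ (n + 1)‖ := by
    have h4 := norm_sub_norm_le (1 : ℂ) (q ^ (n + 1))
    have h3 : ‖q ^ (n + 1)‖ ≤ ‖q‖ := by
      rw [norm_pow]
      calc ‖q‖ ^ (n + 1) ≤ ‖q‖ ^ 1 := pow_le_pow_of_le_one (norm_nonneg q) hq.le (by omega)
        _ = ‖q‖ := pow_one _
    simp only [norm_one] at h4
    linarith
  rw [xq, norm_div, norm_pow]
  exact div_le_div_of_nonneg_left (pow_nonneg (norm_nonneg q) _) h1 h2

lemma summable_geo_shift {r : ℝ} (h0 : 0 ≤ r) (h1 : r < 1) :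
    Summable (fun n : ℕ => r ^ (n + 1)) :=
  ((summable_geometric_of_lt_one h0 h1).mul_right r).congr fun n => (pow_succ r n).symm

lemma summable_n_geo_shift {r : ℝ} (h0 : 0 ≤ r) (h1 : r < 1) :
    Summable (fun n : ℕ => ((n : ℝ) + 1) * r ^ (n + 1)) := by
  have hb : Summable (fun n : ℕ => (n : ℝ) * r ^ n) := by
    have := summable_pow_mul_geometric_of_norm_lt_one 1 (r := r)
      (by rwa [Real.norm_eq_abs, abs_of_nonneg h0])
    simpa using this
  exact (hb.comp_injective (add_left_injective 1)).congr fun n => by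
    simp only [Function.comp_apply]
    push_cast
    ring

lemma aux_inner {q : ℂ} (hq : ‖q‖ < 1) (k : ℕ) :
    ∑' l : ℕ, q ^ ((k + 1) * (l + 1)) * xq q l = ∑' j : ℕ, xq q (k + 1 + j) := by
  have h0 : (0:ℝ) ≤ ‖q‖ := norm_nonneg q
  have hG : Summable (uncurry fun l m : ℕ => q ^ ((l + 1) * (k + m + 2))) := by
    apply Summable.of_norm_bounded (g := fun p : ℕ × ℕ => ‖q‖ ^ (p.1 + 1) * ‖q‖ ^ (p.2 + 1))
    · exact Summable.mul_of_nonneg (f := fun n : ℕ => ‖q‖ ^ (n + 1))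
        (g := fun n : ℕ => ‖q‖ ^ (n + 1))
        (summable_geo_shift h0 hq) (summable_geo_shift h0 hq)
        (fun n => pow_nonneg h0 _) (fun n => pow_nonneg h0 _)
    · intro p
      simp only [uncurry]
      rw [norm_pow, ← pow_add]
      apply pow_le_pow_of_le_one h0 hq.le
      nlinarith [p.1.zero_le, p.2.zero_le]
  calc ∑' l : ℕ, q ^ ((k + 1) * (l + 1)) * xq q l
      = ∑' l : ℕ, ∑' m : ℕ, q ^ ((l + 1) * (k + m + 2)) := by
        refine tsum_congr fun l => ?_
        have he : ∀ m : ℕ, (l + 1) * (k + m + 2) = (k + 1) * (l + 1) + (l + 1) * (m + 1) :=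
          fun m => by ring
        simp_rw [he, pow_add, pow_mul, tsum_mul_left, xq_geom hq l]
    _ = ∑' m : ℕ, ∑' l : ℕ, q ^ ((l + 1) * (k + m + 2)) := (Summable.tsum_comm hG).symm
    _ = ∑' j : ℕ, xq q (k + 1 + j) := by
        refine tsum_congr fun m => ?_
        have he : ∀ l : ℕ, (l + 1) * (k + m + 2) = (k + m + 1 + 1) * (l + 1) := fun l => by ring
        simp_rw [he, pow_mul, xq_geom hq (k + m + 1)]
        congr 1
        omega

lemma summable_Aq {q : ℂ} (hq : ‖q‖ < 1) : Summable (Aq q) := by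
  have h0 : (0:ℝ) ≤ ‖q‖ := norm_nonneg q
  have h1 : (0:ℝ) < 1 - ‖q‖ := by linarith
  apply Summable.of_norm_bounded
    (g := fun p : ℕ × ℕ =>
      (((p.1 : ℝ) + 1) * ‖q‖ ^ (p.1 + 1) / (1 - ‖q‖)) * (‖q‖ ^ (p.2 + 1) / (1 - ‖q‖)))
  · exact Summable.mul_of_nonneg
      (f := fun n : ℕ => ((n : ℝ) + 1) * ‖q‖ ^ (n + 1) / (1 - ‖q‖))
      (g := fun n : ℕ => ‖q‖ ^ (n + 1) / (1 - ‖q‖))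
      ((summable_n_geo_shift h0 hq).div_const _)
      ((summable_geo_shift h0 hq).div_const _)
      (fun n => by positivity) (fun n => by positivity)
  · intro p
    have e1 : ‖Aq q p‖
        = ((p.1 : ℝ) + 1) * ‖q ^ ((p.1 + 1) * (p.2 + 1))‖ * ‖xq q p.1‖ * ‖xq q p.2‖ := by
      rw [Aq, norm_mul, norm_mul, norm_mul]
      congr 2
      have h : ((p.1 : ℂ) + 1) = ((p.1 + 1 : ℕ) : ℂ) := by push_cast; ring
      rw [h, Complex.norm_natCast]
      push_cast; ring
    rw [e1]
    have hx1 := xq_bound hq p.1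
    have hx2 := xq_bound hq p.2
    have hqe : ‖q ^ ((p.1 + 1) * (p.2 + 1))‖ ≤ 1 := by
      rw [norm_pow]; exact pow_le_one₀ h0 hq.le
    have hp1 : (0:ℝ) ≤ (p.1 : ℝ) + 1 := by positivity
    calc ((p.1 : ℝ) + 1) * ‖q ^ ((p.1 + 1) * (p.2 + 1))‖ * ‖xq q p.1‖ * ‖xq q p.2‖
        ≤ ((p.1 : ℝ) + 1) * 1 * (‖q‖ ^ (p.1 + 1) / (1 - ‖q‖)) * (‖q‖ ^ (p.2 + 1) / (1 - ‖q‖)) := by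
          gcongr
      _ = (((p.1 : ℝ) + 1) * ‖q‖ ^ (p.1 + 1) / (1 - ‖q‖)) * (‖q‖ ^ (p.2 + 1) / (1 - ‖q‖)) := by
          ring

theorem lambert_f2_eq_f3 (q : ℂ) (hq : ‖q‖ < 1) :
    ∑' k : ℕ, ∑' l : ℕ,
        (((k : ℂ) + 1) + ((l : ℂ) + 1)) * q ^ ((k + 1) + (l + 1) + (k + 1) * (l + 1))
          / ((1 - q ^ (k + 1)) * (1 - q ^ (l + 1)))
    = ∑' k : ℕ, ∑' j : ℕ,
        2 * ((k : ℂ) + 1) * q ^ ((k + 1) + (k + j + 2))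
          / ((1 - q ^ (k + 1)) * (1 - q ^ (k + j + 2))) := by
  have hne := one_sub_qpow_ne hq
  have hA := summable_Aq hq
  have hAs : Summable (Aq q ∘ Prod.swap) := hA.comp_injective Prod.swap_injective
  have hterm2 : ∀ k l : ℕ,
      (((k : ℂ) + 1) + ((l : ℂ) + 1)) * q ^ ((k + 1) + (l + 1) + (k + 1) * (l + 1))
          / ((1 - q ^ (k + 1)) * (1 - q ^ (l + 1)))
      = Aq q (k, l) + (Aq q ∘ Prod.swap) (k, l) := by
    intro k l
    have he : (k + 1) + (l + 1) + (k + 1) * (l + 1)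
        = (k + 1) + ((l + 1) + (k + 1) * (l + 1)) := by ring
    have he2 : (l + 1) * (k + 1) = (k + 1) * (l + 1) := by ring
    simp only [Function.comp_apply, Prod.swap_prod_mk, Aq, xq, he, pow_add, he2]
    field_simp
  have hAsplit : ∀ k l : ℕ,
      Aq q (k, l) = (((k : ℂ) + 1) * xq q k) * (q ^ ((k + 1) * (l + 1)) * xq q l) := by
    intro k l
    simp only [Aq]
    ring
  calc ∑' k : ℕ, ∑' l : ℕ,
        (((k : ℂ) + 1) + ((l : ℂ) + 1)) * q ^ ((k + 1) + (l + 1) + (k + 1) * (l + 1))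
          / ((1 - q ^ (k + 1)) * (1 - q ^ (l + 1)))
      = ∑' k : ℕ, ∑' l : ℕ, (Aq q (k, l) + (Aq q ∘ Prod.swap) (k, l)) :=
        tsum_congr fun k => tsum_congr fun l => hterm2 k l
    _ = ∑' p : ℕ × ℕ, (Aq q p + (Aq q ∘ Prod.swap) p) := (Summable.tsum_prod (hA.add hAs)).symm
    _ = ∑' p : ℕ × ℕ, Aq q p + ∑' p : ℕ × ℕ, (Aq q ∘ Prod.swap) p := Summable.tsum_add hA hAs
    _ = 2 * ∑' p : ℕ × ℕ, Aq q p := by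
        rw [two_mul]
        congr 1
        exact (Equiv.prodComm ℕ ℕ).tsum_eq (Aq q)
    _ = 2 * ∑' k : ℕ, ∑' l : ℕ, Aq q (k, l) := congrArg (HMul.hMul 2) (Summable.tsum_prod hA)
    _ = ∑' k : ℕ, 2 * ((((k : ℂ) + 1) * xq q k) * ∑' l : ℕ, q ^ ((k + 1) * (l + 1)) * xq q l) := by
        rw [← tsum_mul_left]
        refine tsum_congr fun k => ?_
        rw [tsum_congr (hAsplit k), tsum_mul_left]
    _ = ∑' k : ℕ, ∑' j : ℕ, 2 * ((((k : ℂ) + 1) * xq q k) * xq q (k + 1 + j)) := by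
        refine tsum_congr fun k => ?_
        rw [aux_inner hq k, ← tsum_mul_left, ← tsum_mul_left]
    _ = ∑' k : ℕ, ∑' j : ℕ,
        2 * ((k : ℂ) + 1) * q ^ ((k + 1) + (k + j + 2))
          / ((1 - q ^ (k + 1)) * (1 - q ^ (k + j + 2))) := by
        refine tsum_congr fun k => tsum_congr fun j => ?_
        have he2 : k + 1 + j = k + j + 1 := by ring
        rw [he2, xq, xq, pow_add]
        have h1 := hne k
        have h2 := hne (k + j + 1)
        field_simp
        ring
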